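/- Let b, n be positive integers and let R be a b × n random matrix whose entries are independent Gaussian random variables with mean 0 and variance 1/b. Then for any fixed vectors g, h ∈ ℝ^n, E[(gᵀRᵀRh)²] ≤ (gᵀh)² + (3/b)·‖g‖²·‖h‖². -/

import Mathlib

open MeasureTheory ProbabilityTheory Real
open scoped NNReal ENNReal

section GaussAux

lemma gs_integrable_pow_mul_gauss {c : ℝ} (hc : 0 < c) (k : ℕ) :
    Integrable (fun x : ℝ => x ^ k * Real.exp (-c * x ^ 2)) := by
  have := integrable_rpow_mul_exp_neg_mul_sq hc (s := (k : ℝ))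
    (lt_of_lt_of_le neg_one_lt_zero (Nat.cast_nonneg k))
  simpa [Real.rpow_natCast] using this

lemma gs_integral_pow_mul_gauss_Ioi {c : ℝ} (hc : 0 < c) (k : ℕ) :
    ∫ x in Set.Ioi (0:ℝ), x ^ k * Real.exp (-c * x ^ 2)
      = c ^ (-((k:ℝ) + 1) / 2) * (1 / 2) * Gamma (((k:ℝ) + 1) / 2) := by
  rw [← integral_rpow_mul_exp_neg_mul_rpow (p := 2) (q := (k:ℝ)) two_pos
    (lt_of_lt_of_le neg_one_lt_zero (Nat.cast_nonneg k)) hc]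
  refine setIntegral_congr_fun measurableSet_Ioi (fun x hx => ?_)
  rw [Real.rpow_natCast, Real.rpow_two]

lemma gs_integral_sq_mul_gauss {c : ℝ} (hc : 0 < c) :
    ∫ x : ℝ, x ^ 2 * Real.exp (-c * x ^ 2) = Real.sqrt π / (2 * c * Real.sqrt c) := by
  have h1 : (fun x : ℝ => x ^ 2 * Real.exp (-c * x ^ 2))
      = fun x : ℝ => |x| ^ 2 * Real.exp (-c * |x| ^ 2) := by
    funext x; rw [sq_abs]
  have h := gs_integral_pow_mul_gauss_Ioi hc 2
  push_cast at h
  rw [h1, integral_comp_abs (f := fun x : ℝ => x ^ 2 * Real.exp (-c * x ^ 2)), h]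
  have h32 : ((2:ℝ) + 1) / 2 = 1/2 + 1 := by norm_num
  rw [h32, Real.Gamma_add_one (by norm_num), Real.Gamma_one_half_eq]
  have hc' : c ^ (-((2:ℝ) + 1) / 2) = (c * Real.sqrt c)⁻¹ := by
    rw [show (-((2:ℝ)+1)/2) = -(1 + 1/2) by norm_num, Real.rpow_neg hc.le,
      Real.rpow_add hc, Real.rpow_one, ← Real.sqrt_eq_rpow]
  rw [hc']
  have : Real.sqrt c ≠ 0 := by positivity
  field_simp

lemma gs_integral_pow4_mul_gauss {c : ℝ} (hc : 0 < c) :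
    ∫ x : ℝ, x ^ 4 * Real.exp (-c * x ^ 2) = 3 * Real.sqrt π / (4 * c ^ 2 * Real.sqrt c) := by
  have h1 : (fun x : ℝ => x ^ 4 * Real.exp (-c * x ^ 2))
      = fun x : ℝ => |x| ^ 4 * Real.exp (-c * |x| ^ 2) := by
    funext x; rw [sq_abs, ← abs_pow, abs_of_nonneg (by positivity : (0:ℝ) ≤ x ^ 4)]
  have h := gs_integral_pow_mul_gauss_Ioi hc 4
  push_cast at h
  rw [h1, integral_comp_abs (f := fun x : ℝ => x ^ 4 * Real.exp (-c * x ^ 2)), h]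
  have h52 : ((4:ℝ) + 1) / 2 = (1/2 + 1) + 1 := by norm_num
  rw [h52, Real.Gamma_add_one (by norm_num), Real.Gamma_add_one (by norm_num),
    Real.Gamma_one_half_eq]
  have hc' : c ^ (-((4:ℝ) + 1) / 2) = (c ^ 2 * Real.sqrt c)⁻¹ := by
    rw [show (-((4:ℝ)+1)/2) = -((2:ℝ) + 1/2) by norm_num, Real.rpow_neg hc.le,
      Real.rpow_add hc, ← Real.sqrt_eq_rpow, Real.rpow_two]
  rw [hc']
  have : Real.sqrt c ≠ 0 := by positivity
  field_simp
  ring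

lemma gs_integral_odd_gauss {c : ℝ} {k : ℕ} (hk : Odd k) :
    ∫ x : ℝ, x ^ k * Real.exp (-c * x ^ 2) = 0 := by
  have h := MeasureTheory.integral_neg_eq_self (fun x : ℝ => x ^ k * Real.exp (-c * x ^ 2)) volume
  have h2 : (∫ x : ℝ, (-x) ^ k * Real.exp (-c * (-x) ^ 2))
      = ∫ x : ℝ, -(x ^ k * Real.exp (-c * x ^ 2)) := by
    congr 1; funext x; rw [hk.neg_pow, neg_sq]; ring
  rw [h2, integral_neg] at h
  linarith

lemma gs_gaussianPDFReal_zero_eq (v : ℝ≥0) (x : ℝ) :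
    gaussianPDFReal 0 v x = (Real.sqrt (2 * π * v))⁻¹ * Real.exp (-(2 * (v:ℝ))⁻¹ * x ^ 2) := by
  rw [gaussianPDFReal, sub_zero]
  congr 2
  rw [div_eq_mul_inv]
  ring

lemma gs_gaussianPDF_eq_nnreal (v : ℝ≥0) :
    gaussianPDF 0 v = fun x => ((gaussianPDFReal 0 v x).toNNReal : ℝ≥0∞) := by
  funext x; rfl

lemma gs_integral_fun_gaussianReal {v : ℝ≥0} (hv : v ≠ 0) (f : ℝ → ℝ) :
    ∫ x, f x ∂(gaussianReal 0 v) = ∫ x, gaussianPDFReal 0 v x * f x := by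
  rw [gaussianReal_of_var_ne_zero 0 hv, gs_gaussianPDF_eq_nnreal,
    integral_withDensity_eq_integral_smul ((measurable_gaussianPDFReal 0 v).real_toNNReal) f]
  congr 1
  funext x
  rw [NNReal.smul_def, smul_eq_mul, Real.coe_toNNReal _ (gaussianPDFReal_nonneg 0 v x)]

lemma gs_integrable_pow_gaussianReal (v : ℝ≥0) (k : ℕ) :
    Integrable (fun x : ℝ => x ^ k) (gaussianReal 0 v) := by
  by_cases hv : v = 0
  · subst hv
    rw [gaussianReal_zero_var]
    refine ⟨(measurable_id.pow_const k).aestronglyMeasurable, ?_⟩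
    rw [HasFiniteIntegral, lintegral_dirac]
    exact ENNReal.coe_lt_top
  · rw [gaussianReal_of_var_ne_zero 0 hv, gs_gaussianPDF_eq_nnreal,
      integrable_withDensity_iff_integrable_smul ((measurable_gaussianPDFReal 0 v).real_toNNReal)]
    have hv' : (0:ℝ) < v := by positivity
    have : (fun x : ℝ => (Real.toNNReal (gaussianPDFReal 0 v x)) • x ^ k)
        = fun x : ℝ => (Real.sqrt (2 * π * v))⁻¹ * (x ^ k * Real.exp (-(2 * (v:ℝ))⁻¹ * x ^ 2)) := by
      funext x
      rw [NNReal.smul_def, smul_eq_mul, Real.coe_toNNReal _ (gaussianPDFReal_nonneg 0 v x),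
        gs_gaussianPDFReal_zero_eq]
      ring
    rw [this]
    exact (gs_integrable_pow_mul_gauss (by positivity) k).const_mul _

lemma gs_gauss_mom_odd (v : ℝ≥0) {k : ℕ} (hk : Odd k) :
    ∫ x, x ^ k ∂(gaussianReal 0 v) = 0 := by
  by_cases hv : v = 0
  · subst hv
    rw [gaussianReal_zero_var, integral_dirac]
    exact zero_pow hk.pos.ne'
  · rw [gs_integral_fun_gaussianReal hv]
    have : (fun x : ℝ => gaussianPDFReal 0 v x * x ^ k)
        = fun x : ℝ => (Real.sqrt (2 * π * v))⁻¹ * (x ^ k * Real.exp (-(2 * (v:ℝ))⁻¹ * x ^ 2)) := by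
      funext x; rw [gs_gaussianPDFReal_zero_eq]; ring
    rw [this, integral_const_mul, gs_integral_odd_gauss hk, mul_zero]

lemma gs_sqrt_two_pi_v (v : ℝ≥0) :
    Real.sqrt (2 * π * v) = Real.sqrt π * Real.sqrt (2 * v) := by
  rw [← Real.sqrt_mul pi_pos.le]
  congr 1; ring

lemma gs_gauss_mom_two (v : ℝ≥0) :
    ∫ x, x ^ 2 ∂(gaussianReal 0 v) = v := by
  by_cases hv : v = 0
  · subst hv
    rw [gaussianReal_zero_var, integral_dirac]
    simp
  · rw [gs_integral_fun_gaussianReal hv]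
    have hv' : (0:ℝ) < v := by positivity
    have hrw : (fun x : ℝ => gaussianPDFReal 0 v x * x ^ 2)
        = fun x : ℝ => (Real.sqrt (2 * π * v))⁻¹ * (x ^ 2 * Real.exp (-(2 * (v:ℝ))⁻¹ * x ^ 2)) := by
      funext x; rw [gs_gaussianPDFReal_zero_eq]; ring
    rw [hrw, integral_const_mul, gs_integral_sq_mul_gauss (by positivity),
      gs_sqrt_two_pi_v v]
    have h1 : Real.sqrt ((2 * (v:ℝ))⁻¹) = (Real.sqrt (2 * v))⁻¹ := Real.sqrt_inv _
    rw [h1]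
    have h2 : Real.sqrt (2 * (v:ℝ)) > 0 := Real.sqrt_pos.mpr (by positivity)
    have h3 : Real.sqrt π > 0 := Real.sqrt_pos.mpr pi_pos
    have h4 : Real.sqrt (2 * (v:ℝ)) * Real.sqrt (2 * (v:ℝ)) = 2 * v :=
      Real.mul_self_sqrt (by positivity)
    field_simp

lemma gs_gauss_mom_four (v : ℝ≥0) :
    ∫ x, x ^ 4 ∂(gaussianReal 0 v) = 3 * (v:ℝ) ^ 2 := by
  by_cases hv : v = 0
  · subst hv
    rw [gaussianReal_zero_var, integral_dirac]
    simp
  · rw [gs_integral_fun_gaussianReal hv]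
    have hv' : (0:ℝ) < v := by positivity
    have hrw : (fun x : ℝ => gaussianPDFReal 0 v x * x ^ 4)
        = fun x : ℝ => (Real.sqrt (2 * π * v))⁻¹ * (x ^ 4 * Real.exp (-(2 * (v:ℝ))⁻¹ * x ^ 2)) := by
      funext x; rw [gs_gaussianPDFReal_zero_eq]; ring
    rw [hrw, integral_const_mul, gs_integral_pow4_mul_gauss (by positivity),
      gs_sqrt_two_pi_v v]
    have h1 : Real.sqrt ((2 * (v:ℝ))⁻¹) = (Real.sqrt (2 * v))⁻¹ := Real.sqrt_inv _
    rw [h1]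
    have h2 : Real.sqrt (2 * (v:ℝ)) > 0 := Real.sqrt_pos.mpr (by positivity)
    have h3 : Real.sqrt π > 0 := Real.sqrt_pos.mpr pi_pos
    have h4 : Real.sqrt (2 * (v:ℝ)) * Real.sqrt (2 * (v:ℝ)) = 2 * v :=
      Real.mul_self_sqrt (by positivity)
    field_simp
    nlinarith [h4, h2, h3, sq_nonneg (Real.sqrt (2 * (v:ℝ)))]

end GaussAux

section Family
variable {Ω : Type*} [MeasurableSpace Ω] {μ : Measure Ω} [IsProbabilityMeasure μ]
  {ι : Type*} {X : ι → Ω → ℝ} {v : ℝ≥0}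

lemma gs_mom_pow (hmeas : ∀ p, Measurable (X p))
    (hg : ∀ p, Measure.map (X p) μ = gaussianReal 0 v) (p : ι) (k : ℕ) :
    ∫ ω, (X p ω) ^ k ∂μ = ∫ x, x ^ k ∂(gaussianReal 0 v) := by
  rw [← hg p]
  exact (integral_map (hmeas p).aemeasurable
    (measurable_id.pow_const k).aestronglyMeasurable).symm

lemma gs_integrable_pow_family (hmeas : ∀ p, Measurable (X p))
    (hg : ∀ p, Measure.map (X p) μ = gaussianReal 0 v) (p : ι) (k : ℕ) :
    Integrable (fun ω => (X p ω) ^ k) μ := by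
  have := (integrable_map_measure (μ := μ) (f := X p) (g := fun x : ℝ => x ^ k)
    (measurable_id.pow_const k).aestronglyMeasurable (hmeas p).aemeasurable).mp
    (by rw [hg p]; exact gs_integrable_pow_gaussianReal v k)
  exact this

lemma gs_mom_one (hmeas : ∀ p, Measurable (X p))
    (hg : ∀ p, Measure.map (X p) μ = gaussianReal 0 v) (p : ι) :
    ∫ ω, X p ω ∂μ = 0 := by
  have := gs_mom_pow hmeas hg p 1
  rw [gs_gauss_mom_odd v odd_one] at this
  simpa using this

lemma gs_mom_two (hmeas : ∀ p, Measurable (X p))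
    (hg : ∀ p, Measure.map (X p) μ = gaussianReal 0 v) (p : ι) :
    ∫ ω, (X p ω) ^ 2 ∂μ = v := by
  rw [gs_mom_pow hmeas hg p 2, gs_gauss_mom_two]

lemma gs_pair_int (hmeas : ∀ p, Measurable (X p))
    (hindep : iIndepFun X μ)
    (hg : ∀ p, Measure.map (X p) μ = gaussianReal 0 v) {p q : ι} (hpq : p ≠ q) :
    ∫ ω, X p ω * X q ω ∂μ = 0 := by
  have hI := (hindep.indepFun hpq).integral_mul_eq_mul_integral (hmeas p).aestronglyMeasurable
    (hmeas q).aestronglyMeasurable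
  have : ∫ ω, X p ω * X q ω ∂μ = (∫ ω, X p ω ∂μ) * ∫ ω, X q ω ∂μ := hI
  rw [this, gs_mom_one hmeas hg, zero_mul]

lemma gs_case_two_pairs (hmeas : ∀ p, Measurable (X p))
    (hindep : iIndepFun X μ)
    (hg : ∀ p, Measure.map (X p) μ = gaussianReal 0 v) {p r : ι} (hpr : p ≠ r) :
    ∫ ω, (X p ω) ^ 2 * (X r ω) ^ 2 ∂μ = (v:ℝ) * v := by
  have hI : IndepFun (fun ω => (X p ω) ^ 2) (fun ω => (X r ω) ^ 2) μ :=
    (hindep.indepFun hpr).comp (measurable_id.pow_const 2) (measurable_id.pow_const 2)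
  have h2 := hI.integral_mul_eq_mul_integral ((hmeas p).pow_const 2).aestronglyMeasurable
    ((hmeas r).pow_const 2).aestronglyMeasurable
  have : ∫ ω, (X p ω) ^ 2 * (X r ω) ^ 2 ∂μ
      = (∫ ω, (X p ω) ^ 2 ∂μ) * ∫ ω, (X r ω) ^ 2 ∂μ := h2
  rw [this, gs_mom_two hmeas hg, gs_mom_two hmeas hg]

lemma gs_case_triple (hmeas : ∀ p, Measurable (X p))
    (hindep : iIndepFun X μ)
    (hg : ∀ p, Measure.map (X p) μ = gaussianReal 0 v) {p s : ι} (hps : p ≠ s) :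
    ∫ ω, (X p ω) ^ 3 * X s ω ∂μ = 0 := by
  have hI : IndepFun (fun ω => (X p ω) ^ 3) (X s) μ :=
    (hindep.indepFun hps).comp (measurable_id.pow_const 3) measurable_id
  have h2 := hI.integral_mul_eq_mul_integral ((hmeas p).pow_const 3).aestronglyMeasurable
    (hmeas s).aestronglyMeasurable
  have : ∫ ω, (X p ω) ^ 3 * X s ω ∂μ
      = (∫ ω, (X p ω) ^ 3 ∂μ) * ∫ ω, X s ω ∂μ := h2
  rw [this, gs_mom_one hmeas hg, mul_zero]

lemma gs_case_pair_single (hmeas : ∀ p, Measurable (X p))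
    (hindep : iIndepFun X μ)
    (hg : ∀ p, Measure.map (X p) μ = gaussianReal 0 v) {a b c : ι}
    (hab : a ≠ b) (hac : a ≠ c) (hbc : b ≠ c) :
    ∫ ω, (X a ω) ^ 2 * (X b ω * X c ω) ∂μ = 0 := by
  have hI : IndepFun (X a * X a) (X b * X c) μ :=
    hindep.indepFun_mul_mul hmeas a a b c hab hac hab hac
  have hI' : IndepFun (fun ω => (X a ω) ^ 2) (fun ω => X b ω * X c ω) μ := by
    have : (X a * X a) = fun ω => (X a ω) ^ 2 := by funext ω; simp [sq]
    rwa [this] at hI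
  have h2 := hI'.integral_mul_eq_mul_integral ((hmeas a).pow_const 2).aestronglyMeasurable
    ((hmeas b).mul (hmeas c)).aestronglyMeasurable
  have : ∫ ω, (X a ω) ^ 2 * (X b ω * X c ω) ∂μ
      = (∫ ω, (X a ω) ^ 2 ∂μ) * ∫ ω, X b ω * X c ω ∂μ := h2
  rw [this, gs_pair_int hmeas hindep hg hbc, mul_zero]

lemma gs_case_all_distinct (hmeas : ∀ p, Measurable (X p))
    (hindep : iIndepFun X μ)
    (hg : ∀ p, Measure.map (X p) μ = gaussianReal 0 v) {p q r s : ι}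
    (hpq : p ≠ q) (hpr : p ≠ r) (hps : p ≠ s) (hqr : q ≠ r) (hqs : q ≠ s) :
    ∫ ω, (X p ω * X q ω) * (X r ω * X s ω) ∂μ = 0 := by
  have hI : IndepFun (X p * X q) (X r * X s) μ :=
    hindep.indepFun_mul_mul hmeas p q r s hpr hps hqr hqs
  have h2 := hI.integral_mul_eq_mul_integral ((hmeas p).mul (hmeas q)).aestronglyMeasurable
    ((hmeas r).mul (hmeas s)).aestronglyMeasurable
  have : ∫ ω, (X p ω * X q ω) * (X r ω * X s ω) ∂μ
      = (∫ ω, X p ω * X q ω ∂μ) * ∫ ω, X r ω * X s ω ∂μ := h2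
  rw [this, gs_pair_int hmeas hindep hg hpq, zero_mul]

lemma gs_abs4 (a b c d : ℝ) : |a * b * c * d| ≤ (a ^ 4 + b ^ 4 + c ^ 4 + d ^ 4) / 4 := by
  have h1 : |a * b * c * d| = |a| * |b| * |c| * |d| := by
    rw [abs_mul, abs_mul, abs_mul]
  have ha4 : |a| ^ 4 = a ^ 4 := by
    rw [show (4:ℕ) = 2 * 2 from rfl, pow_mul, pow_mul, sq_abs]
  have hb4 : |b| ^ 4 = b ^ 4 := by
    rw [show (4:ℕ) = 2 * 2 from rfl, pow_mul, pow_mul, sq_abs]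
  have hc4 : |c| ^ 4 = c ^ 4 := by
    rw [show (4:ℕ) = 2 * 2 from rfl, pow_mul, pow_mul, sq_abs]
  have hd4 : |d| ^ 4 = d ^ 4 := by
    rw [show (4:ℕ) = 2 * 2 from rfl, pow_mul, pow_mul, sq_abs]
  rw [h1, ← ha4, ← hb4, ← hc4, ← hd4]
  nlinarith [abs_nonneg a, abs_nonneg b, abs_nonneg c, abs_nonneg d,
    sq_nonneg (|a| * |b| - |c| * |d|), sq_nonneg (|a| ^ 2 - |b| ^ 2),
    sq_nonneg (|c| ^ 2 - |d| ^ 2), mul_nonneg (abs_nonneg a) (abs_nonneg b),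
    mul_nonneg (abs_nonneg c) (abs_nonneg d)]

lemma gs_integrable_quad (hmeas : ∀ p, Measurable (X p))
    (hg : ∀ p, Measure.map (X p) μ = gaussianReal 0 v) (p q r s : ι) :
    Integrable (fun ω => X p ω * X q ω * X r ω * X s ω) μ := by
  have h4 : ∀ t : ι, Integrable (fun ω => (X t ω) ^ 4) μ :=
    fun t => gs_integrable_pow_family hmeas hg t 4
  have hsum4 : Integrable
      (fun ω => ((X p ω) ^ 4 + (X q ω) ^ 4 + (X r ω) ^ 4 + (X s ω) ^ 4) / 4) μ := by
    have := ((((h4 p).add (h4 q)).add (h4 r)).add (h4 s)).div_const (4:ℝ)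
    simpa using this
  refine Integrable.mono'
    (g := fun ω => ((X p ω) ^ 4 + (X q ω) ^ 4 + (X r ω) ^ 4 + (X s ω) ^ 4) / 4)
    hsum4
    ((((hmeas p).mul (hmeas q)).mul (hmeas r)).mul (hmeas s)).aestronglyMeasurable
    (Filter.Eventually.of_forall fun ω => ?_)
  rw [Real.norm_eq_abs]
  exact gs_abs4 _ _ _ _

variable [DecidableEq ι] in
lemma gs_wick4 (hmeas : ∀ p, Measurable (X p))
    (hindep : iIndepFun X μ)
    (hg : ∀ p, Measure.map (X p) μ = gaussianReal 0 v) (p q r s : ι) :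
    ∫ ω, X p ω * X q ω * X r ω * X s ω ∂μ =
        (if p = q then (v:ℝ) else 0) * (if r = s then (v:ℝ) else 0)
      + (if p = r then (v:ℝ) else 0) * (if q = s then (v:ℝ) else 0)
      + (if p = s then (v:ℝ) else 0) * (if q = r then (v:ℝ) else 0) := by
  classical
  by_cases hpq : p = q
  · subst hpq
    by_cases hpr : p = r
    · subst hpr
      by_cases hps : p = s
      · subst hps
        have hre : (∫ ω, X p ω * X p ω * X p ω * X p ω ∂μ) = ∫ ω, (X p ω) ^ 4 ∂μ := by
          congr 1; funext ω; ring
        rw [hre, gs_mom_pow hmeas hg p 4, gs_gauss_mom_four]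
        simp; ring
      · have hre : (∫ ω, X p ω * X p ω * X p ω * X s ω ∂μ)
            = ∫ ω, (X p ω) ^ 3 * X s ω ∂μ := by congr 1; funext ω; ring
        rw [hre, gs_case_triple hmeas hindep hg hps]
        simp [hps]
    · by_cases hps : p = s
      · subst hps
        have hre : (∫ ω, X p ω * X p ω * X r ω * X p ω ∂μ)
            = ∫ ω, (X p ω) ^ 3 * X r ω ∂μ := by congr 1; funext ω; ring
        rw [hre, gs_case_triple hmeas hindep hg hpr]
        simp [hpr, Ne.symm hpr]
      · by_cases hrs : r = s
        · subst hrs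
          have hre : (∫ ω, X p ω * X p ω * X r ω * X r ω ∂μ)
              = ∫ ω, (X p ω) ^ 2 * (X r ω) ^ 2 ∂μ := by congr 1; funext ω; ring
          rw [hre, gs_case_two_pairs hmeas hindep hg hpr]
          simp [hpr]
        · have hre : (∫ ω, X p ω * X p ω * X r ω * X s ω ∂μ)
              = ∫ ω, (X p ω) ^ 2 * (X r ω * X s ω) ∂μ := by congr 1; funext ω; ring
          rw [hre, gs_case_pair_single hmeas hindep hg hpr hps hrs]
          simp [hpr, hps, hrs]
  · by_cases hpr : p = r
    · subst hpr
      by_cases hps : p = s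
      · subst hps
        have hre : (∫ ω, X p ω * X q ω * X p ω * X p ω ∂μ)
            = ∫ ω, (X p ω) ^ 3 * X q ω ∂μ := by congr 1; funext ω; ring
        rw [hre, gs_case_triple hmeas hindep hg hpq]
        simp [hpq, Ne.symm hpq]
      · by_cases hqs : q = s
        · subst hqs
          have hre : (∫ ω, X p ω * X q ω * X p ω * X q ω ∂μ)
              = ∫ ω, (X p ω) ^ 2 * (X q ω) ^ 2 ∂μ := by congr 1; funext ω; ring
          rw [hre, gs_case_two_pairs hmeas hindep hg hpq]
          simp [hpq]
        · have hre : (∫ ω, X p ω * X q ω * X p ω * X s ω ∂μ)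
              = ∫ ω, (X p ω) ^ 2 * (X q ω * X s ω) ∂μ := by congr 1; funext ω; ring
          rw [hre, gs_case_pair_single hmeas hindep hg hpq hps hqs]
          simp [hpq, hps, hqs]
    · by_cases hps : p = s
      · subst hps
        by_cases hqr : q = r
        · subst hqr
          have hre : (∫ ω, X p ω * X q ω * X q ω * X p ω ∂μ)
              = ∫ ω, (X p ω) ^ 2 * (X q ω) ^ 2 ∂μ := by congr 1; funext ω; ring
          rw [hre, gs_case_two_pairs hmeas hindep hg hpq]
          simp [hpq]
        · have hre : (∫ ω, X p ω * X q ω * X r ω * X p ω ∂μ)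
              = ∫ ω, (X p ω) ^ 2 * (X q ω * X r ω) ∂μ := by congr 1; funext ω; ring
          rw [hre, gs_case_pair_single hmeas hindep hg hpq hpr hqr]
          simp [hpq, hpr, hqr]
      · by_cases hqr : q = r
        · subst hqr
          by_cases hqs : q = s
          · subst hqs
            have hre : (∫ ω, X p ω * X q ω * X q ω * X q ω ∂μ)
                = ∫ ω, (X q ω) ^ 3 * X p ω ∂μ := by congr 1; funext ω; ring
            rw [hre, gs_case_triple hmeas hindep hg (Ne.symm hpq)]
            simp [hpq]
          · have hre : (∫ ω, X p ω * X q ω * X q ω * X s ω ∂μ)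
                = ∫ ω, (X q ω) ^ 2 * (X p ω * X s ω) ∂μ := by congr 1; funext ω; ring
            rw [hre, gs_case_pair_single hmeas hindep hg (Ne.symm hpq) hqs hps]
            simp [hpq, hps, hqs]
        · by_cases hqs : q = s
          · subst hqs
            have hre : (∫ ω, X p ω * X q ω * X r ω * X q ω ∂μ)
                = ∫ ω, (X q ω) ^ 2 * (X p ω * X r ω) ∂μ := by congr 1; funext ω; ring
            rw [hre, gs_case_pair_single hmeas hindep hg (Ne.symm hpq) hqr hpr]
            simp [hpq, hpr, hqr]
          · by_cases hrs : r = s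
            · subst hrs
              have hre : (∫ ω, X p ω * X q ω * X r ω * X r ω ∂μ)
                  = ∫ ω, (X r ω) ^ 2 * (X p ω * X q ω) ∂μ := by congr 1; funext ω; ring
              rw [hre, gs_case_pair_single hmeas hindep hg (Ne.symm hpr) (Ne.symm hqr) hpq]
              simp [hpq, hpr, hqr]
            · have hre : (∫ ω, X p ω * X q ω * X r ω * X s ω ∂μ)
                  = ∫ ω, (X p ω * X q ω) * (X r ω * X s ω) ∂μ := by congr 1; funext ω; ring
              rw [hre, gs_case_all_distinct hmeas hindep hg hpq hpr hps hqr hqs]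
              simp [hpq, hpr, hps, hqr, hqs, hrs]

end Family

lemma gs_prod4_expand {n : ℕ} (a b c d : Fin n → ℝ) :
    (∑ j, a j) * (∑ k, b k) * ((∑ j, c j) * (∑ k, d k))
    = ∑ j, ∑ k, ∑ j', ∑ k', a j * b k * (c j' * d k') := by
  rw [Finset.sum_mul_sum, Finset.sum_mul_sum, Finset.sum_mul]
  refine Finset.sum_congr rfl fun j _ => ?_
  rw [Finset.sum_mul]
  refine Finset.sum_congr rfl fun k _ => ?_
  rw [Finset.mul_sum]
  refine Finset.sum_congr rfl fun j' _ => ?_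
  rw [Finset.mul_sum]

/-- Second-moment bound for Gaussian sketches: if `R` has i.i.d. `N(0, 1/b)` entries,
then `E[(gᵀRᵀRh)²] ≤ (gᵀh)² + (3/b)‖g‖²‖h‖²`. -/
theorem gaussian_sketch_second_moment
    {b n : ℕ} (hb : 0 < b) (hn : 0 < n)
    {Ω : Type*} [MeasurableSpace Ω] (μ : Measure Ω) [IsProbabilityMeasure μ]
    (R : Ω → Matrix (Fin b) (Fin n) ℝ)
    (hmeas : ∀ i j, Measurable fun ω => R ω i j)
    (hindep : iIndepFun
      (fun (p : Fin b × Fin n) ω => R ω p.1 p.2) μ)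
    (hgauss : ∀ i j, Measure.map (fun ω => R ω i j) μ = gaussianReal 0 (b : ℝ≥0)⁻¹)
    (g h : Fin n → ℝ) :
    (∫ ω, (∑ i, (∑ j, R ω i j * g j) * (∑ j, R ω i j * h j)) ^ 2 ∂μ)
      ≤ (∑ j, g j * h j) ^ 2 + 3 / (b : ℝ) * (∑ j, g j ^ 2) * (∑ j, h j ^ 2) := by
  classical
  set v : ℝ≥0 := (b : ℝ≥0)⁻¹ with hvdef
  set X : Fin b × Fin n → Ω → ℝ := fun p ω => R ω p.1 p.2 with hXdef
  have hmeas' : ∀ p, Measurable (X p) := fun p => hmeas p.1 p.2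
  have hindep' : iIndepFun X μ :=
    hindep
  have hg' : ∀ p, Measure.map (X p) μ = gaussianReal 0 v := fun p => hgauss p.1 p.2
  set w : ℝ := (v : ℝ) with hwdef
  -- Step 1: pointwise expansion
  have hexp : ∀ ω, (∑ i, (∑ j, R ω i j * g j) * (∑ j, R ω i j * h j)) ^ 2
      = ∑ i : Fin b, ∑ i' : Fin b, ∑ j : Fin n, ∑ k : Fin n, ∑ j' : Fin n, ∑ k' : Fin n,
        (g j * h k * (g j' * h k')) * (R ω i j * R ω i k * R ω i' j' * R ω i' k') := by
    intro ω
    rw [sq, Finset.sum_mul_sum]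
    refine Finset.sum_congr rfl fun i _ => Finset.sum_congr rfl fun i' _ => ?_
    rw [gs_prod4_expand (fun j => R ω i j * g j) (fun k => R ω i k * h k)
      (fun j' => R ω i' j' * g j') (fun k' => R ω i' k' * h k')]
    refine Finset.sum_congr rfl fun j _ => Finset.sum_congr rfl fun k _ =>
      Finset.sum_congr rfl fun j' _ => Finset.sum_congr rfl fun k' _ => by ring
  -- integrability of each term
  have hInt4 : ∀ (i i' : Fin b) (j k j' k' : Fin n),
      Integrable (fun ω => (g j * h k * (g j' * h k'))
        * (R ω i j * R ω i k * R ω i' j' * R ω i' k')) μ := by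
    intro i i' j k j' k'
    exact (gs_integrable_quad hmeas' hg' (i, j) (i, k) (i', j') (i', k')).const_mul _
  -- Step 2: swap integral and sums
  have hswap : (∫ ω, (∑ i, (∑ j, R ω i j * g j) * (∑ j, R ω i j * h j)) ^ 2 ∂μ)
      = ∑ i : Fin b, ∑ i' : Fin b, ∑ j : Fin n, ∑ k : Fin n, ∑ j' : Fin n, ∑ k' : Fin n,
        ∫ ω, (g j * h k * (g j' * h k'))
          * (R ω i j * R ω i k * R ω i' j' * R ω i' k') ∂μ := by
    have h1 : (∫ ω, (∑ i, (∑ j, R ω i j * g j) * (∑ j, R ω i j * h j)) ^ 2 ∂μ)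
        = ∫ ω, (∑ i : Fin b, ∑ i' : Fin b, ∑ j : Fin n, ∑ k : Fin n, ∑ j' : Fin n, ∑ k' : Fin n,
          (g j * h k * (g j' * h k')) * (R ω i j * R ω i k * R ω i' j' * R ω i' k')) ∂μ := by
      congr 1; funext ω; exact hexp ω
    rw [h1]
    rw [integral_finset_sum _ (fun i _ => integrable_finset_sum _ (fun i' _ =>
      integrable_finset_sum _ (fun j _ => integrable_finset_sum _ (fun k _ =>
      integrable_finset_sum _ (fun j' _ => integrable_finset_sum _ (fun k' _ =>
      hInt4 i i' j k j' k'))))))]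
    refine Finset.sum_congr rfl fun i _ => ?_
    rw [integral_finset_sum _ (fun i' _ =>
      integrable_finset_sum _ (fun j _ => integrable_finset_sum _ (fun k _ =>
      integrable_finset_sum _ (fun j' _ => integrable_finset_sum _ (fun k' _ =>
      hInt4 i i' j k j' k')))))]
    refine Finset.sum_congr rfl fun i' _ => ?_
    rw [integral_finset_sum _ (fun j _ => integrable_finset_sum _ (fun k _ =>
      integrable_finset_sum _ (fun j' _ => integrable_finset_sum _ (fun k' _ =>
      hInt4 i i' j k j' k'))))]
    refine Finset.sum_congr rfl fun j _ => ?_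
    rw [integral_finset_sum _ (fun k _ =>
      integrable_finset_sum _ (fun j' _ => integrable_finset_sum _ (fun k' _ =>
      hInt4 i i' j k j' k')))]
    refine Finset.sum_congr rfl fun k _ => ?_
    rw [integral_finset_sum _ (fun j' _ => integrable_finset_sum _ (fun k' _ =>
      hInt4 i i' j k j' k'))]
    refine Finset.sum_congr rfl fun j' _ => ?_
    rw [integral_finset_sum _ (fun k' _ => hInt4 i i' j k j' k')]
  -- Step 3: evaluate each integral with Wick's formula
  have hwick : ∀ (i i' : Fin b) (j k j' k' : Fin n),
      (∫ ω, (g j * h k * (g j' * h k'))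
        * (R ω i j * R ω i k * R ω i' j' * R ω i' k') ∂μ)
      = (g j * h k * (g j' * h k')) *
          ((if j = k then w else 0) * (if j' = k' then w else 0)
           + (if (i = i' ∧ j = j') then w else 0) * (if (i = i' ∧ k = k') then w else 0)
           + (if (i = i' ∧ j = k') then w else 0) * (if (i = i' ∧ k = j') then w else 0)) := by
    intro i i' j k j' k'
    rw [integral_const_mul]
    have hW := gs_wick4 hmeas' hindep' hg' (i, j) (i, k) (i', j') (i', k')
    simp only [hXdef, Prod.mk.injEq, eq_self_iff_true, true_and] at hW
    rw [hW]
  rw [hswap]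
  simp only [hwick]
  -- Step 4: the summation algebra
  have hsum : (∑ i : Fin b, ∑ i' : Fin b, ∑ j : Fin n, ∑ k : Fin n, ∑ j' : Fin n, ∑ k' : Fin n,
      (g j * h k * (g j' * h k')) *
        ((if j = k then w else 0) * (if j' = k' then w else 0)
         + (if (i = i' ∧ j = j') then w else 0) * (if (i = i' ∧ k = k') then w else 0)
         + (if (i = i' ∧ j = k') then w else 0) * (if (i = i' ∧ k = j') then w else 0)))
      = ((b:ℝ)*(b:ℝ)) * (w^2 * (∑ j, g j * h j)^2)
        + (b:ℝ) * (w^2 * ((∑ j, g j ^2) * (∑ j, h j^2) + (∑ j, g j * h j)^2)) := by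
    have hsplit : ∀ (P Q : Prop) (_ : Decidable P) (_ : Decidable Q),
        (if (P ∧ Q) then w else 0) = (if P then (1:ℝ) else 0) * (if Q then w else 0) := by
      intro P Q _ _
      by_cases hP : P <;> by_cases hQ : Q <;> simp [hP, hQ]
    simp only [hsplit, mul_ite, ite_mul, mul_zero, zero_mul, mul_one, one_mul,
      mul_add, Finset.sum_add_distrib, Finset.sum_ite_eq, Finset.sum_ite_eq',
      Finset.mem_univ, if_true, Finset.sum_ite_irrel, Finset.sum_const_zero]
    ring_nf
    simp only [Finset.sum_const, Finset.card_univ, Fintype.card_fin, nsmul_eq_mul]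
    have key : ∀ (u1 w1 u2 w2 : Fin n → ℝ) (c : ℝ),
        (∑ x : Fin n, ∑ y : Fin n, u1 x * w1 x * u2 y * w2 y * c)
          = (∑ x : Fin n, u1 x * w1 x) * (∑ y : Fin n, u2 y * w2 y) * c := by
      intro u1 w1 u2 w2 c
      calc (∑ x : Fin n, ∑ y : Fin n, u1 x * w1 x * u2 y * w2 y * c)
          = ∑ x : Fin n, (u1 x * w1 x) * (∑ y : Fin n, u2 y * w2 y * c) := by
            refine Finset.sum_congr rfl fun x _ => ?_
            rw [Finset.mul_sum]
            exact Finset.sum_congr rfl fun y _ => by ring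
        _ = (∑ x : Fin n, u1 x * w1 x) * (∑ y : Fin n, u2 y * w2 y * c) := by
            rw [Finset.sum_mul]
        _ = (∑ x : Fin n, u1 x * w1 x) * (∑ y : Fin n, u2 y * w2 y) * c := by
            rw [← Finset.sum_mul, mul_assoc]
    have r2 : (∑ x : Fin n, ∑ y : Fin n, w ^ 2 * g x ^ 2 * h y ^ 2)
        = ∑ x : Fin n, ∑ y : Fin n, g x * g x * h y * h y * w ^ 2 :=
      Finset.sum_congr rfl fun x _ => Finset.sum_congr rfl fun y _ => by ring
    have r3 : (∑ x : Fin n, ∑ y : Fin n, w ^ 2 * g x * h y * g y * h x)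
        = ∑ x : Fin n, ∑ y : Fin n, g x * h x * g y * h y * w ^ 2 :=
      Finset.sum_congr rfl fun x _ => Finset.sum_congr rfl fun y _ => by ring
    rw [r2, r3, key g h g h (w^2), key g g h h (w^2)]
    have sg : (∑ x : Fin n, g x * g x) = ∑ x : Fin n, g x ^ 2 :=
      Finset.sum_congr rfl fun x _ => (sq (g x)).symm
    have sh : (∑ x : Fin n, h x * h x) = ∑ x : Fin n, h x ^ 2 :=
      Finset.sum_congr rfl fun x _ => (sq (h x)).symm
    rw [sg, sh]
    ring
  rw [hsum]
  -- Step 5: the final inequality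
  have hb' : (0:ℝ) < (b:ℝ) := by exact_mod_cast hb
  have hw : w = (b:ℝ)⁻¹ := by
    rw [hwdef, hvdef]
    push_cast
    rfl
  have hCS : (∑ j, g j * h j)^2 ≤ (∑ j, g j ^ 2) * (∑ j, h j ^ 2) :=
    Finset.sum_mul_sq_le_sq_mul_sq _ _ _
  have hG2 : (0:ℝ) ≤ ∑ j, g j ^ 2 := Finset.sum_nonneg fun j _ => sq_nonneg _
  have hH2 : (0:ℝ) ≤ ∑ j, h j ^ 2 := Finset.sum_nonneg fun j _ => sq_nonneg _
  rw [hw]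
  have hbb : ((b:ℝ)*(b:ℝ)) * (((b:ℝ)⁻¹)^2 * (∑ j, g j * h j)^2) = (∑ j, g j * h j)^2 := by
    field_simp
  have hbbb : (b:ℝ) * (((b:ℝ)⁻¹)^2 * ((∑ j, g j ^2) * (∑ j, h j^2) + (∑ j, g j * h j)^2))
      = (b:ℝ)⁻¹ * ((∑ j, g j ^2) * (∑ j, h j^2) + (∑ j, g j * h j)^2) := by
    field_simp
  rw [hbb, hbbb]
  have hbinv : (0:ℝ) < (b:ℝ)⁻¹ := by positivity
  have h3b : 3 / (b:ℝ) = 3 * (b:ℝ)⁻¹ := by ring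
  rw [h3b]
  nlinarith [mul_nonneg hbinv.le (sub_nonneg.mpr hCS), mul_nonneg hbinv.le (mul_nonneg hG2 hH2)]
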